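/- Let f(z) = Σ_{i≥0} f_i z^i be a power series with radius of convergence strictly greater than π and let k be a positive integer. There is a constant K > 0 (depending only on f and k) with the following property: if Q is a polynomial series and M ≥ 0 satisfy Q_n = 0 for n < k and ‖Q_n‖_n ≤ M·(n−k)!·π^{−n} for all n ≥ k, then the polynomial series f(dD)Q satisfies (f(dD)Q)_n = 0 for n < k and ‖(f(dD)Q)_n‖_n ≤ M·K·(n−k)!·π^{−n} for all n ≥ k. -/

import Mathlib

open Polynomial Classical

/-- The operator `D` on polynomials: `(Dp)(u) = (1 - u²)·p′(u)`. -/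
noncomputable def Dop (p : Polynomial ℂ) : Polynomial ℂ := (1 - X ^ 2) * derivative p

/-- The polynomials τ_n: τ₀ = 1, τ₁ = X, τ_{n+1} = (1/n)·D τ_n for n ≥ 1. -/
noncomputable def tau : ℕ → Polynomial ℂ
  | 0 => 1
  | 1 => X
  | n + 2 => (((n + 1 : ℕ) : ℂ))⁻¹ • Dop (tau (n + 1))

/-- The norm `‖p‖_n` of a polynomial `p ∈ P_n`: writing `p = Σ_{k=0}^n a_k τ_k`
(the `τ_k` form a basis of `P_n`, so the `a_k` are unique), set
`‖p‖_n = Σ_{k=0}^n |a_k|·(π/2)^{n-k}`. -/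
noncomputable def tauNorm (n : ℕ) (p : Polynomial ℂ) : ℝ :=
  if h : ∃ a : ℕ → ℂ, p = ∑ k ∈ Finset.range (n + 1), a k • tau k then
    ∑ k ∈ Finset.range (n + 1), ‖h.choose k‖ * (Real.pi / 2) ^ (n - k)
  else 0

/-- The operator `f(dD)` on polynomial series: `(f(dD)Q)_n = Σ_{i=0}^n f_i · D^i Q_{n-i}`. -/
noncomputable def fdD (f : ℕ → ℂ) (Q : ℕ → Polynomial ℂ) (n : ℕ) : Polynomial ℂ :=
  ∑ i ∈ Finset.range (n + 1), f i • Dop^[i] (Q (n - i))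


lemma oneSubX2_natDegree : (1 - X ^ 2 : Polynomial ℂ).natDegree = 2 := by
  have h : (1 - X ^ 2 : Polynomial ℂ) = -(X ^ 2 - C 1) := by rw [map_one]; ring
  rw [h, natDegree_neg, natDegree_X_pow_sub_C]

lemma oneSubX2_leadingCoeff : (1 - X ^ 2 : Polynomial ℂ).leadingCoeff = -1 := by
  have h : (1 - X ^ 2 : Polynomial ℂ) = -(X ^ 2 - C 1) := by rw [map_one]; ring
  rw [h, leadingCoeff_neg, (monic_X_pow_sub_C (1:ℂ) (two_ne_zero)).leadingCoeff]

lemma oneSubX2_ne_zero : (1 - X ^ 2 : Polynomial ℂ) ≠ 0 := by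
  intro h
  have := oneSubX2_leadingCoeff
  rw [h] at this; simp at this

lemma tau_spec : ∀ n : ℕ, (tau (n+1)).natDegree = n + 1 ∧ (tau (n+1)).leadingCoeff = (-1)^n := by
  intro n
  induction n with
  | zero => simp [tau]
  | succ n ih =>
    obtain ⟨hd, hl⟩ := ih
    have hne : tau (n+1) ≠ 0 := by
      intro h; rw [h] at hl; simp at hl
      exact (pow_ne_zero n (neg_ne_zero.mpr one_ne_zero)) hl.symm
    have htop : (tau (n+1)).coeff (n+1) = (-1)^n := by
      rw [← hl]; unfold leadingCoeff; rw [hd]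
    have hdc : (derivative (tau (n+1))).coeff n = (-1)^n * ((n:ℂ)+1) := by
      rw [coeff_derivative, htop]
    have hcne : ((-1:ℂ))^n * ((n:ℂ)+1) ≠ 0 := by
      apply mul_ne_zero (pow_ne_zero n (neg_ne_zero.mpr one_ne_zero))
      exact Nat.cast_add_one_ne_zero n
    have hdle : (derivative (tau (n+1))).natDegree ≤ n := by
      have := natDegree_derivative_le (tau (n+1)); omega
    have hdd : (derivative (tau (n+1))).natDegree = n := by
      refine le_antisymm hdle (le_natDegree_of_ne_zero ?_)
      rw [hdc]; exact hcne
    have hdne : derivative (tau (n+1)) ≠ 0 := by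
      intro h; apply hcne; rw [← hdc, h]; simp
    have hdl : (derivative (tau (n+1))).leadingCoeff = (-1)^n * ((n:ℂ)+1) := by
      rw [leadingCoeff, hdd, hdc]
    have heq : tau (n+2) = (((n + 1 : ℕ) : ℂ))⁻¹ • Dop (tau (n+1)) := rfl
    have hsm : tau (n+2) = C (((n + 1 : ℕ) : ℂ))⁻¹ * ((1 - X ^ 2) * derivative (tau (n+1))) := by
      rw [heq, Dop, smul_eq_C_mul]
    have hcinv : (((n + 1 : ℕ) : ℂ))⁻¹ ≠ 0 := by
      simp [Nat.cast_add_one_ne_zero n]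
    constructor
    · rw [hsm, natDegree_C_mul hcinv, natDegree_mul oneSubX2_ne_zero hdne,
        oneSubX2_natDegree, hdd]; omega
    · rw [hsm, leadingCoeff, natDegree_C_mul hcinv, coeff_C_mul]
      have : ((1 - X ^ 2) * derivative (tau (n+1))).leadingCoeff = -((-1)^n * ((n:ℂ)+1)) := by
        rw [leadingCoeff_mul, oneSubX2_leadingCoeff, hdl]; ring
      rw [leadingCoeff] at this
      rw [this]
      have h1 : (1 + (n:ℂ)) ≠ 0 := by
        have := Nat.cast_add_one_ne_zero (R := ℂ) n
        intro h; apply this; rw [← h]; ring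
      push_cast
      have h2 : ((n:ℂ) + 1) ≠ 0 := by intro h; apply h1; rw [← h]; ring
      field_simp
      ring

lemma tau_natDegree (n : ℕ) : (tau n).natDegree = n := by
  cases n with
  | zero => simp [tau]
  | succ n => exact (tau_spec n).1

lemma tau_ne_zero (n : ℕ) : tau n ≠ 0 := by
  cases n with
  | zero => simp [tau]
  | succ n =>
    intro h
    have hl := (tau_spec n).2
    rw [h] at hl
    simp at hl
    exact (pow_ne_zero n (neg_ne_zero.mpr one_ne_zero)) hl.symm
lemma tau_coeff_self_ne (n : ℕ) : (tau n).coeff n ≠ 0 := by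
  have h : (tau n).coeff n = (tau n).leadingCoeff := by rw [leadingCoeff, tau_natDegree]
  rw [h]; exact leadingCoeff_ne_zero.mpr (tau_ne_zero n)

lemma tau_coeff_eq_zero {k m : ℕ} (h : k < m) : (tau k).coeff m = 0 :=
  coeff_eq_zero_of_natDegree_lt (by rw [tau_natDegree]; exact h)

lemma tau_degree_le (n : ℕ) : (tau n).degree ≤ (n : WithBot ℕ) := by
  simpa [tau_natDegree] using degree_le_natDegree (p := tau n)

lemma rep_degree_le {n : ℕ} {a : ℕ → ℂ} {p : Polynomial ℂ}
    (ha : p = ∑ k ∈ Finset.range (n + 1), a k • tau k) : p.degree ≤ (n : WithBot ℕ) := by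
  rw [ha]
  refine (degree_sum_le _ _).trans ?_
  rw [Finset.sup_le_iff]
  intro k hk
  refine (degree_smul_le _ _).trans ((tau_degree_le k).trans ?_)
  exact_mod_cast Nat.lt_succ_iff.mp (Finset.mem_range.mp hk)

lemma rep_zero : ∀ (n : ℕ) (c : ℕ → ℂ),
    (∑ k ∈ Finset.range (n + 1), c k • tau k) = 0 → ∀ k ≤ n, c k = 0 := by
  intro n
  induction n with
  | zero =>
    intro c h k hk
    interval_cases k
    simpa [tau] using h
  | succ n ih =>
    intro c h k hk
    have htop : c (n + 1) = 0 := by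
      have h2 := congrArg (fun p => Polynomial.coeff p (n + 1)) h
      simp only [finset_sum_coeff, coeff_smul, coeff_zero, smul_eq_mul] at h2
      rw [Finset.sum_eq_single (n + 1)] at h2
      · exact (mul_eq_zero.mp h2).resolve_right (tau_coeff_self_ne (n + 1))
      · intro b hb hbne
        rw [tau_coeff_eq_zero (by simp at hb; omega), mul_zero]
      · intro hmem; simp at hmem
    have h' : (∑ k ∈ Finset.range (n + 1), c k • tau k) = 0 := by
      rw [Finset.sum_range_succ, htop, zero_smul, add_zero] at h
      exact h
    rcases Nat.lt_succ_iff_lt_or_eq.mp (Nat.lt_succ_of_le hk) with h1 | h1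
    · exact ih c h' k (by omega)
    · rw [h1]; exact htop

lemma rep_exists : ∀ (n : ℕ) (p : Polynomial ℂ), p.degree ≤ (n : WithBot ℕ) →
    ∃ a : ℕ → ℂ, p = ∑ k ∈ Finset.range (n + 1), a k • tau k := by
  intro n
  induction n with
  | zero =>
    intro p hp
    refine ⟨fun _ => p.coeff 0, ?_⟩
    have := eq_C_of_degree_le_zero (by exact_mod_cast hp)
    simpa [tau, smul_eq_C_mul] using this
  | succ n ih =>
    intro p hp
    set c := p.coeff (n + 1) / (tau (n + 1)).coeff (n + 1) with hc
    have hq : (p - c • tau (n + 1)).degree ≤ (n : WithBot ℕ) := by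
      rw [degree_le_iff_coeff_zero]
      intro m hm
      have hm' : n < m := by exact_mod_cast hm
      rw [coeff_sub, coeff_smul, smul_eq_mul]
      rcases eq_or_lt_of_le (Nat.succ_le_of_lt hm') with h1 | h1
      · rw [← h1, hc, div_mul_cancel₀ _ (tau_coeff_self_ne (n + 1)), sub_self]
      · rw [coeff_eq_zero_of_degree_lt (lt_of_le_of_lt hp (by exact_mod_cast h1)),
          tau_coeff_eq_zero h1, mul_zero, sub_zero]
    obtain ⟨a, ha⟩ := ih _ hq
    refine ⟨fun j => if j = n + 1 then c else a j, ?_⟩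
    rw [Finset.sum_range_succ]
    simp only [if_pos]
    have hcongr : ∑ j ∈ Finset.range (n + 1), (if j = n + 1 then c else a j) • tau j
        = ∑ j ∈ Finset.range (n + 1), a j • tau j := by
      refine Finset.sum_congr rfl fun j hj => ?_
      rw [if_neg (by simp at hj; omega)]
    rw [hcongr, ← ha]
    ring

lemma tauNorm_eq {n : ℕ} {p : Polynomial ℂ} {a : ℕ → ℂ}
    (ha : p = ∑ k ∈ Finset.range (n + 1), a k • tau k) :
    tauNorm n p = ∑ k ∈ Finset.range (n + 1), ‖a k‖ * (Real.pi / 2) ^ (n - k) := by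
  have h : ∃ b : ℕ → ℂ, p = ∑ k ∈ Finset.range (n + 1), b k • tau k := ⟨a, ha⟩
  rw [tauNorm, dif_pos h]
  refine Finset.sum_congr rfl fun k hk => ?_
  have hd : ∑ j ∈ Finset.range (n + 1), (h.choose j - a j) • tau j = 0 := by
    simp only [sub_smul, Finset.sum_sub_distrib, ← h.choose_spec, ← ha, sub_self]
  have hz := rep_zero n _ hd k (Nat.lt_succ_iff.mp (Finset.mem_range.mp hk))
  rw [sub_eq_zero.mp hz]

lemma Dop_add (p q : Polynomial ℂ) : Dop (p + q) = Dop p + Dop q := by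
  simp [Dop, mul_add]

lemma Dop_smul (c : ℂ) (p : Polynomial ℂ) : Dop (c • p) = c • Dop p := by
  simp [Dop, derivative_smul, mul_smul_comm]

noncomputable def DopL : Polynomial ℂ →ₗ[ℂ] Polynomial ℂ where
  toFun := Dop
  map_add' := Dop_add
  map_smul' := Dop_smul

lemma Dop_iter_eq (i : ℕ) (p : Polynomial ℂ) : Dop^[i] p = (DopL ^ i) p :=
  (Module.End.pow_apply DopL i p).symm

lemma Dop_iter_zero (i : ℕ) : Dop^[i] (0 : Polynomial ℂ) = 0 := by
  rw [Dop_iter_eq]; exact map_zero _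

lemma Dop_iter_smul (i : ℕ) (c : ℂ) (p : Polynomial ℂ) :
    Dop^[i] (c • p) = c • Dop^[i] p := by
  rw [Dop_iter_eq, Dop_iter_eq, map_smul]

lemma Dop_iter_sum {ι : Type*} (i : ℕ) (s : Finset ι) (g : ι → Polynomial ℂ) :
    Dop^[i] (∑ x ∈ s, g x) = ∑ x ∈ s, Dop^[i] (g x) := by
  simp only [Dop_iter_eq]; exact map_sum _ _ _

lemma Dop_tau (m : ℕ) : Dop (tau m) = (m : ℂ) • tau (m + 1) := by
  match m with
  | 0 => simp [tau, Dop]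
  | n + 1 =>
    have h : tau (n + 2) = (((n + 1 : ℕ) : ℂ))⁻¹ • Dop (tau (n + 1)) := rfl
    have hne : ((n + 1 : ℕ) : ℂ) ≠ 0 := Nat.cast_ne_zero.mpr (Nat.succ_ne_zero n)
    rw [h, smul_smul, mul_inv_cancel₀ hne, one_smul]

def rise (m i : ℕ) : ℕ := ∏ j ∈ Finset.range i, (m + j)

lemma rise_succ (m i : ℕ) : rise m (i + 1) = rise m i * (m + i) :=
  Finset.prod_range_succ _ _

lemma rise_pos {m : ℕ} (hm : 1 ≤ m) (i : ℕ) : 0 < rise m i :=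
  Finset.prod_pos fun j _ => by omega

lemma rise_le_rise {m m' : ℕ} (h : m ≤ m') (i : ℕ) : rise m i ≤ rise m' i :=
  Finset.prod_le_prod' fun j _ => by omega

lemma fact_rise (m i : ℕ) : m.factorial * rise (m + 1) i = (m + i).factorial := by
  induction i with
  | zero => simp [rise]
  | succ i ih =>
    rw [rise_succ, ← mul_assoc, ih, show m + (i + 1) = (m + i) + 1 from rfl,
      Nat.factorial_succ]
    ring

lemma rise_mul_fact_le (s t i : ℕ) :
    rise (s + 1 + t) i * t.factorial ≤ (i + 1) ^ s * (t + i).factorial := by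
  have hP : 0 < rise (t + 1) s := rise_pos (by omega) s
  have key : rise (t + i + 1) s ≤ (i + 1) ^ s * rise (t + 1) s := by
    calc rise (t + i + 1) s = ∏ j ∈ Finset.range s, (t + i + 1 + j) := rfl
      _ ≤ ∏ j ∈ Finset.range s, ((i + 1) * (t + 1 + j)) :=
          Finset.prod_le_prod' fun j _ => by nlinarith
      _ = (i + 1) ^ s * rise (t + 1) s := by
          rw [Finset.prod_mul_distrib, Finset.prod_const, Finset.card_range]; rfl
  have h1 : rise (s + 1 + t) i * t.factorial * rise (t + 1) s = (t + s + i).factorial := by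
    calc rise (s + 1 + t) i * t.factorial * rise (t + 1) s
        = rise (t + s + 1) i * (t.factorial * rise (t + 1) s) := by
          rw [show s + 1 + t = t + s + 1 by omega]; ring
      _ = rise (t + s + 1) i * (t + s).factorial := by rw [fact_rise]
      _ = (t + s).factorial * rise (t + s + 1) i := by ring
      _ = (t + s + i).factorial := fact_rise _ _
  have h2 : (t + s + i).factorial = (t + i).factorial * rise (t + i + 1) s := by
    rw [fact_rise]; congr 1; omega
  have h3 : rise (s + 1 + t) i * t.factorial * rise (t + 1) s
      ≤ ((i + 1) ^ s * (t + i).factorial) * rise (t + 1) s := by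
    rw [h1, h2]
    calc (t + i).factorial * rise (t + i + 1) s
        ≤ (t + i).factorial * ((i + 1) ^ s * rise (t + 1) s) :=
          Nat.mul_le_mul_left _ key
      _ = ((i + 1) ^ s * (t + i).factorial) * rise (t + 1) s := by ring
  exact Nat.le_of_mul_le_mul_right h3 hP

lemma Dop_iter_tau (i m : ℕ) : Dop^[i] (tau m) = ((rise m i : ℕ) : ℂ) • tau (m + i) := by
  induction i with
  | zero => simp [rise]
  | succ i ih =>
    rw [Function.iterate_succ_apply', ih, Dop_smul, Dop_tau, rise_succ, smul_smul]
    push_cast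
    rw [show m + i + 1 = m + (i + 1) from rfl]


lemma Dop_iter_rep {n i : ℕ} (hin : i ≤ n) (a : ℕ → ℂ) :
    Dop^[i] (∑ m ∈ Finset.range (n - i + 1), a m • tau m)
      = ∑ j ∈ Finset.range (n + 1),
          (if i ≤ j then ((rise (j - i) i : ℕ) : ℂ) * a (j - i) else 0) • tau j := by
  rw [Dop_iter_sum]
  conv_rhs => rw [Finset.range_eq_Ico,
    ← Finset.sum_Ico_consecutive _ (Nat.zero_le i) (by omega : i ≤ n + 1)]
  have h1 : ∑ j ∈ Finset.Ico 0 i,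
      (if i ≤ j then ((rise (j - i) i : ℕ) : ℂ) * a (j - i) else 0) • tau j = 0 := by
    refine Finset.sum_eq_zero fun j hj => ?_
    rw [if_neg (by simp at hj; omega), zero_smul]
  rw [h1, zero_add]
  conv_rhs => rw [Finset.sum_Ico_eq_sum_range]
  refine Finset.sum_congr (by congr 1; omega) fun m hm => ?_
  rw [if_pos (Nat.le_add_right i m), Nat.add_sub_cancel_left, Dop_iter_smul, Dop_iter_tau,
    smul_smul, add_comm m i, mul_comm]

lemma tauNorm_nonneg (n : ℕ) (p : Polynomial ℂ) : 0 ≤ tauNorm n p := by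
  rw [tauNorm]; split
  · have := Real.pi_pos; positivity
  · exact le_refl 0

lemma tauNorm_zero (n : ℕ) : tauNorm n (0 : Polynomial ℂ) = 0 := by
  rw [tauNorm_eq (a := fun _ => 0) (by simp)]; simp

lemma tauNorm_smul {n : ℕ} (c : ℂ) {p : Polynomial ℂ} (hp : p.degree ≤ (n : WithBot ℕ)) :
    tauNorm n (c • p) = ‖c‖ * tauNorm n p := by
  obtain ⟨a, ha⟩ := rep_exists n p hp
  rw [tauNorm_eq ha, tauNorm_eq (a := fun k => c * a k)
    (by rw [ha, Finset.smul_sum]; simp [smul_smul])]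
  rw [Finset.mul_sum]
  refine Finset.sum_congr rfl fun k _ => ?_
  rw [norm_mul]; ring

lemma tauNorm_add_le {n : ℕ} {p q : Polynomial ℂ} (hp : p.degree ≤ (n : WithBot ℕ))
    (hq : q.degree ≤ (n : WithBot ℕ)) :
    tauNorm n (p + q) ≤ tauNorm n p + tauNorm n q := by
  obtain ⟨a, ha⟩ := rep_exists n p hp
  obtain ⟨b, hb⟩ := rep_exists n q hq
  rw [tauNorm_eq ha, tauNorm_eq hb, tauNorm_eq (a := fun k => a k + b k)
    (by rw [ha, hb, ← Finset.sum_add_distrib]; simp [add_smul])]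
  rw [← Finset.sum_add_distrib]
  refine Finset.sum_le_sum fun k _ => ?_
  rw [← add_mul]
  have hw : (0:ℝ) ≤ (Real.pi / 2) ^ (n - k) := by have := Real.pi_pos; positivity
  exact mul_le_mul_of_nonneg_right (norm_add_le _ _) hw

lemma tauNorm_sum_le {ι : Type*} {n : ℕ} (s : Finset ι) (g : ι → Polynomial ℂ)
    (h : ∀ x ∈ s, (g x).degree ≤ (n : WithBot ℕ)) :
    tauNorm n (∑ x ∈ s, g x) ≤ ∑ x ∈ s, tauNorm n (g x) := by
  induction s using Finset.cons_induction with
  | empty => simp [tauNorm_zero]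
  | cons x s hx ih =>
    rw [Finset.sum_cons, Finset.sum_cons]
    have hdeg : (∑ y ∈ s, g y).degree ≤ (n : WithBot ℕ) := by
      refine (degree_sum_le _ _).trans ?_
      rw [Finset.sup_le_iff]
      exact fun y hy => h y (Finset.mem_cons_of_mem hy)
    calc tauNorm n (g x + ∑ y ∈ s, g y)
        ≤ tauNorm n (g x) + tauNorm n (∑ y ∈ s, g y) :=
          tauNorm_add_le (h x (Finset.mem_cons_self _ _)) hdeg
      _ ≤ tauNorm n (g x) + ∑ y ∈ s, tauNorm n (g y) := by
          exact add_le_add le_rfl (ih fun y hy => h y (Finset.mem_cons_of_mem hy))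

lemma Dop_iter_degree_le {n i : ℕ} (hin : i ≤ n) {p : Polynomial ℂ}
    (hp : p.degree ≤ ((n - i : ℕ) : WithBot ℕ)) :
    (Dop^[i] p).degree ≤ (n : WithBot ℕ) := by
  obtain ⟨a, ha⟩ := rep_exists (n - i) p hp
  rw [ha, Dop_iter_rep hin a]
  exact rep_degree_le rfl

lemma tauNorm_Dop_iter {n i : ℕ} (hin : i ≤ n) {p : Polynomial ℂ}
    (hp : p.degree ≤ ((n - i : ℕ) : WithBot ℕ)) :
    tauNorm n (Dop^[i] p) ≤ (rise (n - i) i : ℝ) * tauNorm (n - i) p := by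
  obtain ⟨a, ha⟩ := rep_exists (n - i) p hp
  have hrw : Dop^[i] p = ∑ j ∈ Finset.range (n + 1),
      (if i ≤ j then ((rise (j - i) i : ℕ) : ℂ) * a (j - i) else 0) • tau j := by
    rw [ha]; exact Dop_iter_rep hin a
  rw [tauNorm_eq hrw, tauNorm_eq ha]
  conv_lhs => rw [Finset.range_eq_Ico,
    ← Finset.sum_Ico_consecutive _ (Nat.zero_le i) (by omega : i ≤ n + 1)]
  have h1 : ∑ j ∈ Finset.Ico 0 i,
      ‖(if i ≤ j then ((rise (j - i) i : ℕ) : ℂ) * a (j - i) else 0)‖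
        * (Real.pi / 2) ^ (n - j) = 0 := by
    refine Finset.sum_eq_zero fun j hj => ?_
    rw [if_neg (by simp at hj; omega)]
    simp
  rw [h1, zero_add]
  conv_lhs => rw [Finset.sum_Ico_eq_sum_range]
  rw [Finset.mul_sum, (by omega : n + 1 - i = n - i + 1)]
  refine Finset.sum_le_sum fun m hm => ?_
  have hm' : m ≤ n - i := by simp at hm; omega
  rw [if_pos (Nat.le_add_right i m), Nat.add_sub_cancel_left, norm_mul, Complex.norm_natCast]
  have hw : (0:ℝ) ≤ (Real.pi / 2) ^ (n - (i + m)) := by have := Real.pi_pos; positivity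
  have hsub : n - (i + m) = n - i - m := by omega
  rw [hsub]
  calc (rise m i : ℝ) * ‖a m‖ * (Real.pi / 2) ^ (n - i - m)
      ≤ (rise (n - i) i : ℝ) * ‖a m‖ * (Real.pi / 2) ^ (n - i - m) := by
        have : (rise m i : ℝ) ≤ (rise (n - i) i : ℝ) := by
          exact_mod_cast rise_le_rise hm' i
        have h0 : (0:ℝ) ≤ ‖a m‖ := norm_nonneg _
        have hw' : (0:ℝ) ≤ (Real.pi / 2) ^ (n - i - m) := by have := Real.pi_pos; positivity
        exact mul_le_mul_of_nonneg_right (mul_le_mul_of_nonneg_right this h0) hw'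
    _ = (rise (n - i) i : ℝ) * (‖a m‖ * (Real.pi / 2) ^ (n - i - m)) := by ring

set_option maxHeartbeats 1000000 in
theorem stmt_6 (f : ℕ → ℂ)
    (hf : ∃ r : ℝ, Real.pi < r ∧ ∃ Cf : ℝ, ∀ i : ℕ, ‖f i‖ * r ^ i ≤ Cf)
    (k : ℕ) (hk : 1 ≤ k) :
    ∃ K > (0 : ℝ), ∀ Q : ℕ → Polynomial ℂ, (∀ n : ℕ, (Q n).degree ≤ (n : WithBot ℕ)) →
      ∀ M : ℝ, 0 ≤ M → (∀ n : ℕ, n < k → Q n = 0) →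
      (∀ n : ℕ, k ≤ n → tauNorm n (Q n) ≤ M * (Nat.factorial (n - k) : ℝ) / Real.pi ^ n) →
      (∀ n : ℕ, n < k → fdD f Q n = 0) ∧
      (∀ n : ℕ, k ≤ n →
        tauNorm n (fdD f Q n) ≤ M * K * (Nat.factorial (n - k) : ℝ) / Real.pi ^ n) := by
  obtain ⟨r, hπr, Cf, hCf⟩ := hf
  have hπ : (0:ℝ) < Real.pi := Real.pi_pos
  have hr : (0:ℝ) < r := hπ.trans hπr
  set q : ℝ := Real.pi / r with hqdef
  have hq0 : 0 < q := div_pos hπ hr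
  have hq1 : q < 1 := (div_lt_one hr).mpr hπr
  have hCf0 : 0 ≤ Cf := le_trans (by positivity) (hCf 0)
  have hs1 : Summable (fun i : ℕ => (i:ℝ) ^ (k-1) * q ^ i) :=
    summable_pow_mul_geometric_of_norm_lt_one (k-1)
      (by rw [Real.norm_eq_abs, abs_of_pos hq0]; exact hq1)
  have hs2 : Summable (fun i : ℕ => ((i:ℝ)+1) ^ (k-1) * q ^ i) := by
    have h3 : Summable (fun i : ℕ => ((i+1:ℕ):ℝ) ^ (k-1) * q ^ (i+1)) :=
      (summable_nat_add_iff 1).2 hs1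
    have h4 := h3.mul_left q⁻¹
    refine h4.congr fun i => ?_
    push_cast
    have he : q⁻¹ * (((i:ℝ)+1)^(k-1) * (q^i * q)) = ((i:ℝ)+1)^(k-1) * q^i * (q * q⁻¹) := by
      ring
    rw [pow_succ, he, mul_inv_cancel₀ hq0.ne', mul_one]
  set S : ℝ := ∑' i : ℕ, ((i:ℝ)+1) ^ (k-1) * q ^ i with hS
  have hS0 : 0 ≤ S := tsum_nonneg fun i => by positivity
  refine ⟨Cf * S + 1, by positivity, ?_⟩
  intro Q hQdeg M hM hQ0 hQb
  constructor
  · intro n hn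
    rw [fdD]
    refine Finset.sum_eq_zero fun i hi => ?_
    rw [hQ0 (n - i) (by omega), Dop_iter_zero, smul_zero]
  · intro n hkn
    have hdeg : ∀ i ∈ Finset.range (n+1),
        (f i • Dop^[i] (Q (n-i))).degree ≤ (n : WithBot ℕ) := by
      intro i hi
      have hi' : i ≤ n := by simp at hi; omega
      exact (degree_smul_le _ _).trans (Dop_iter_degree_le hi' (hQdeg (n-i)))
    have step1 : tauNorm n (fdD f Q n)
        ≤ ∑ i ∈ Finset.range (n+1), tauNorm n (f i • Dop^[i] (Q (n-i))) := by
      rw [fdD]; exact tauNorm_sum_le _ _ hdeg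
    have hterm : ∀ i ∈ Finset.range (n+1),
        tauNorm n (f i • Dop^[i] (Q (n-i)))
          ≤ (M * (Nat.factorial (n-k) : ℝ) / Real.pi ^ n)
              * (Cf * (((i:ℝ)+1) ^ (k-1) * q ^ i)) := by
      intro i hi
      have hi' : i ≤ n := by simp at hi; omega
      rw [tauNorm_smul _ (Dop_iter_degree_le hi' (hQdeg (n-i)))]
      have habs : ‖f i‖ = ‖f i‖ := rfl
      rw [habs]
      by_cases hik : k ≤ n - i
      · have hb := hQb (n-i) hik
        have h2 := tauNorm_Dop_iter hi' (hQdeg (n-i))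
        have hfπ : ‖f i‖ * Real.pi ^ i ≤ Cf * q ^ i := by
          have h5 : ‖f i‖ * r ^ i * (Real.pi ^ i / r ^ i) ≤ Cf * (Real.pi ^ i / r ^ i) :=
            mul_le_mul_of_nonneg_right (hCf i) (by positivity)
          calc ‖f i‖ * Real.pi ^ i = ‖f i‖ * r ^ i * (Real.pi ^ i / r ^ i) := by
                field_simp
            _ ≤ Cf * (Real.pi ^ i / r ^ i) := h5
            _ = Cf * q ^ i := by rw [hqdef, div_pow]
        have hnat : (rise (n-i) i : ℝ) * (Nat.factorial (n-i-k) : ℝ)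
            ≤ ((i:ℝ)+1) ^ (k-1) * (Nat.factorial (n-k) : ℝ) := by
          have h6 := rise_mul_fact_le (k-1) (n-i-k) i
          have e1 : (k-1)+1+(n-i-k) = n - i := by omega
          have e2 : (n-i-k)+i = n-k := by omega
          rw [e1, e2] at h6
          exact_mod_cast h6
        have hpow : Real.pi ^ (n-i) * Real.pi ^ i = Real.pi ^ n := by
          rw [← pow_add]; congr 1; omega
        have hRT : tauNorm n (Dop^[i] (Q (n-i)))
            ≤ (rise (n-i) i : ℝ) * (M * (Nat.factorial (n-i-k) : ℝ) / Real.pi ^ (n-i)) :=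
          h2.trans (mul_le_mul_of_nonneg_left hb (by positivity))
        calc ‖f i‖ * tauNorm n (Dop^[i] (Q (n-i)))
            ≤ ‖f i‖ * ((rise (n-i) i : ℝ)
                * (M * (Nat.factorial (n-i-k) : ℝ) / Real.pi ^ (n-i))) :=
              mul_le_mul_of_nonneg_left hRT (norm_nonneg _)
          _ = (M / Real.pi ^ n) * ((‖f i‖ * Real.pi ^ i)
                * ((rise (n-i) i : ℝ) * (Nat.factorial (n-i-k) : ℝ))) := by
              rw [← hpow]
              have hπi : Real.pi ^ (n-i) ≠ 0 := by positivity
              have hπi' : Real.pi ^ i ≠ 0 := by positivity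
              field_simp
          _ ≤ (M / Real.pi ^ n) * ((Cf * q ^ i)
                * (((i:ℝ)+1) ^ (k-1) * (Nat.factorial (n-k) : ℝ))) := by
              refine mul_le_mul_of_nonneg_left ?_ (by positivity)
              exact mul_le_mul hfπ hnat (by positivity) (by positivity)
          _ = (M * (Nat.factorial (n-k) : ℝ) / Real.pi ^ n)
                * (Cf * (((i:ℝ)+1) ^ (k-1) * q ^ i)) := by ring
      · rw [hQ0 (n-i) (by omega), Dop_iter_zero, tauNorm_zero, mul_zero]
        positivity
    calc tauNorm n (fdD f Q n)
        ≤ ∑ i ∈ Finset.range (n+1), tauNorm n (f i • Dop^[i] (Q (n-i))) := step1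
      _ ≤ ∑ i ∈ Finset.range (n+1), (M * (Nat.factorial (n-k) : ℝ) / Real.pi ^ n)
            * (Cf * (((i:ℝ)+1) ^ (k-1) * q ^ i)) := Finset.sum_le_sum hterm
      _ = (M * (Nat.factorial (n-k) : ℝ) / Real.pi ^ n) * Cf
            * ∑ i ∈ Finset.range (n+1), ((i:ℝ)+1) ^ (k-1) * q ^ i := by
          rw [Finset.mul_sum]
          refine Finset.sum_congr rfl fun i _ => by ring
      _ ≤ (M * (Nat.factorial (n-k) : ℝ) / Real.pi ^ n) * Cf * S := by
          refine mul_le_mul_of_nonneg_left ?_ (by positivity)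
          exact Summable.sum_le_tsum _ (fun i _ => by positivity) hs2
      _ ≤ M * (Cf * S + 1) * (Nat.factorial (n-k) : ℝ) / Real.pi ^ n := by
          rw [div_mul_eq_mul_div, div_mul_eq_mul_div, div_le_div_iff₀ (by positivity) (by positivity)]
          ring_nf
          nlinarith [mul_nonneg hM (mul_nonneg hCf0 hS0),
            mul_nonneg hM (Nat.cast_nonneg (Nat.factorial (n-k))),
            pow_nonneg hπ.le n]
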